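/- The action of the circle group S^1 = {z ∈ ℂ : |z| = 1} on the special unitary group SU(3) given by z · A = diag(z^8, z^7, z^{-5}) · A · diag(z^{-6}, z^{-4}, 1) is free: if diag(z^8, z^7, z^{-5}) · A · diag(z^{-6}, z^{-4}, 1) = A for some A ∈ SU(3), then z = 1. -/

import Mathlib

private lemma esch_pow_coprime_eq_one {z : ℂ} (m n : ℕ) (h : Nat.gcd m n = 1)
    (hm : z ^ m = 1) (hn : z ^ n = 1) : z = 1 := by
  have d1 : orderOf z ∣ m := orderOf_dvd_of_pow_eq_one hm
  have d2 : orderOf z ∣ n := orderOf_dvd_of_pow_eq_one hn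
  have hd : orderOf z ∣ Nat.gcd m n := Nat.dvd_gcd d1 d2
  rw [h] at hd
  exact orderOf_eq_one_iff.mp (Nat.dvd_one.mp hd)

private lemma esch_entry {z c : ℂ} (hz : z ≠ 0) (a b : ℤ) (n : ℕ) (hab : a + b = (n : ℤ))
    (h : z ^ a * c * z ^ b = c) : c = 0 ∨ z ^ n = 1 := by
  rcases eq_or_ne c 0 with hc | hc
  · exact Or.inl hc
  · right
    have h2 : (z ^ a * z ^ b) * c = c := by
      calc (z ^ a * z ^ b) * c = z ^ a * c * z ^ b := by ring
        _ = c := h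
    have h3 : z ^ a * z ^ b = 1 := by
      rcases (mul_left_eq_self₀.mp h2) with h3 | h3
      · exact h3
      · exact absurd h3 hc
    rw [← zpow_add₀ hz, hab, zpow_natCast] at h3
    exact h3

/-- The circle action on `SU(3)` with Eschenburg parameters `(8, 7, -5; 6, 4, 0)` is free. -/
theorem eschenburg_action_free_8_7_m5_6_4_0 :
    ∀ z : ℂ, ‖z‖ = 1 →
    ∀ A : Matrix.specialUnitaryGroup (Fin 3) ℂ,
      Matrix.diagonal ![z ^ (8 : ℤ), z ^ (7 : ℤ), z ^ (-5 : ℤ)] *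
          (A : Matrix (Fin 3) (Fin 3) ℂ) *
          Matrix.diagonal ![z ^ (-6 : ℤ), z ^ (-4 : ℤ), 1] = (A : Matrix (Fin 3) (Fin 3) ℂ) →
      z = 1 := by
  intro z hz A h
  have hz0 : z ≠ 0 := by
    intro h0
    rw [h0] at hz
    simp at hz
  set M : Matrix (Fin 3) (Fin 3) ℂ := (A : Matrix (Fin 3) (Fin 3) ℂ) with hM
  have hdet : M.det = 1 := (Matrix.mem_specialUnitaryGroup_iff.mp A.2).2
  have hdet0 : M.det ≠ 0 := by rw [hdet]; exact one_ne_zero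
  have hentry : ∀ i j,
      (![z ^ (8 : ℤ), z ^ (7 : ℤ), z ^ (-5 : ℤ)] i) * M i j *
        (![z ^ (-6 : ℤ), z ^ (-4 : ℤ), 1] j) = M i j := by
    intro i j
    have := congrFun (congrFun h i) j
    rwa [Matrix.mul_diagonal, Matrix.diagonal_mul] at this
  -- row 0 entries: exponents 2, 4, 8
  have h00 : M 0 0 = 0 ∨ z ^ (2 : ℕ) = 1 := by
    have e := hentry 0 0; simp only [Matrix.cons_val_zero] at e
    exact esch_entry hz0 8 (-6) 2 (by norm_num) e
  have h01 : M 0 1 = 0 ∨ z ^ (4 : ℕ) = 1 := by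
    have e := hentry 0 1; simp only [Matrix.cons_val_zero, Matrix.cons_val_one, Matrix.head_cons] at e
    exact esch_entry hz0 8 (-4) 4 (by norm_num) e
  have h02 : M 0 2 = 0 ∨ z ^ (8 : ℕ) = 1 := by
    have e := hentry 0 2
    simp only [Matrix.cons_val_zero, Matrix.cons_val_two, Matrix.tail_cons, Matrix.head_cons] at e
    rw [show (1 : ℂ) = z ^ (0 : ℤ) by simp] at e
    exact esch_entry hz0 8 0 8 (by norm_num) e
  -- row 1 entries: exponents 1, 3, 7
  have h10 : M 1 0 = 0 ∨ z ^ (1 : ℕ) = 1 := by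
    have e := hentry 1 0
    simp only [Matrix.cons_val_zero, Matrix.cons_val_one, Matrix.head_cons] at e
    exact esch_entry hz0 7 (-6) 1 (by norm_num) e
  have h11 : M 1 1 = 0 ∨ z ^ (3 : ℕ) = 1 := by
    have e := hentry 1 1
    simp only [Matrix.cons_val_one, Matrix.head_cons] at e
    exact esch_entry hz0 7 (-4) 3 (by norm_num) e
  have h12 : M 1 2 = 0 ∨ z ^ (7 : ℕ) = 1 := by
    have e := hentry 1 2
    simp only [Matrix.cons_val_one, Matrix.cons_val_two, Matrix.tail_cons, Matrix.head_cons] at e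
    rw [show (1 : ℂ) = z ^ (0 : ℤ) by simp] at e
    exact esch_entry hz0 7 0 7 (by norm_num) e
  have hodd : z ^ (1 : ℕ) = 1 ∨ z ^ (3 : ℕ) = 1 ∨ z ^ (7 : ℕ) = 1 := by
    rcases h10 with h10 | h10
    · rcases h11 with h11 | h11
      · rcases h12 with h12 | h12
        · exfalso
          apply hdet0
          apply Matrix.det_eq_zero_of_row_eq_zero 1
          intro j
          fin_cases j <;> assumption
        · exact Or.inr (Or.inr h12)
      · exact Or.inr (Or.inl h11)
    · exact Or.inl h10
  have heven : z ^ (2 : ℕ) = 1 ∨ z ^ (4 : ℕ) = 1 ∨ z ^ (8 : ℕ) = 1 := by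
    rcases h00 with h00 | h00
    · rcases h01 with h01 | h01
      · rcases h02 with h02 | h02
        · exfalso
          apply hdet0
          apply Matrix.det_eq_zero_of_row_eq_zero 0
          intro j
          fin_cases j <;> assumption
        · exact Or.inr (Or.inr h02)
      · exact Or.inr (Or.inl h01)
    · exact Or.inl h00
  rcases hodd with ho | ho | ho <;> rcases heven with he | he | he <;>
    exact esch_pow_coprime_eq_one _ _ (by norm_num) ho he
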